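/- For real x ∈ [1/3, 1), the sequence of iterates Bl^n(x) of Bl(x) = (x² + 1/3)/(1 + x²/3) is strictly increasing and converges to 1. -/
import Mathlib


open Filter

/-- The restriction of the parabolic Blaschke product to the real line. -/
noncomputable def BlR : ℝ → ℝ := fun x => (x ^ 2 + 1 / 3) / (1 + x ^ 2 / 3)

lemma BlR_denom_pos (x : ℝ) : 0 < 1 + x ^ 2 / 3 := by positivity

lemma BlR_mem (x : ℝ) (hx : x ∈ Set.Ico (1 / 3 : ℝ) 1) :
    BlR x ∈ Set.Ico (1 / 3 : ℝ) 1 ∧ x < BlR x := by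
  obtain ⟨h1, h2⟩ := hx
  have hd := BlR_denom_pos x
  have hpos : (0:ℝ) < 1 - x := by linarith
  refine ⟨⟨?_, ?_⟩, ?_⟩
  · rw [BlR, le_div_iff₀ hd]; nlinarith
  · rw [BlR, div_lt_one hd]; nlinarith
  · rw [BlR, lt_div_iff₀ hd]
    nlinarith [mul_pos (mul_pos hpos hpos) hpos]

/-- For `x ∈ [1/3, 1)` the iterates `BlR^[n] x` strictly increase to `1`. -/
theorem BlR_iterates_increase_to_one (x : ℝ) (hx : x ∈ Set.Ico (1 / 3 : ℝ) 1) :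
    StrictMono (fun n : ℕ => BlR^[n] x) ∧
    Tendsto (fun n : ℕ => BlR^[n] x) atTop (nhds 1) := by
  set f : ℕ → ℝ := fun n => BlR^[n] x with hf
  have hmem : ∀ n, f n ∈ Set.Ico (1 / 3 : ℝ) 1 := by
    intro n
    induction n with
    | zero => simpa [hf] using hx
    | succ n ih =>
      have := (BlR_mem _ ih).1
      simpa [hf, Function.iterate_succ_apply'] using this
  have hstep : ∀ n, f n < f (n + 1) := by
    intro n
    have := (BlR_mem _ (hmem n)).2
    simpa [hf, Function.iterate_succ_apply'] using this
  have hmono : StrictMono f := strictMono_nat_of_lt_succ hstep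
  refine ⟨hmono, ?_⟩
  have hbdd : BddAbove (Set.range f) := ⟨1, by rintro _ ⟨n, rfl⟩; exact (hmem n).2.le⟩
  have hlim := tendsto_atTop_ciSup hmono.monotone hbdd
  set L := ⨆ n, f n with hL
  have hL1 : L ≤ 1 := ciSup_le fun n => (hmem n).2.le
  have hfix : BlR L = L := by
    have hc : ContinuousAt BlR L := by
      have : ContinuousAt (fun y : ℝ => (y ^ 2 + 1 / 3) / (1 + y ^ 2 / 3)) L := by
        apply ContinuousAt.div
        · fun_prop
        · fun_prop
        · exact ne_of_gt (BlR_denom_pos L)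
      exact this
    have h1 : Tendsto (fun n => f (n + 1)) atTop (nhds L) :=
      hlim.comp (tendsto_add_atTop_nat 1)
    have h2 : Tendsto (fun n => BlR (f n)) atTop (nhds (BlR L)) :=
      hc.tendsto.comp hlim
    have heq : (fun n => BlR (f n)) = fun n => f (n + 1) := by
      funext n; simp [hf, Function.iterate_succ_apply']
    rw [heq] at h2
    exact tendsto_nhds_unique h2 h1
  have hcube : (L - 1) ^ 3 = 0 := by
    have hd := BlR_denom_pos L
    have hnum : L ^ 2 + 1 / 3 = L * (1 + L ^ 2 / 3) := by
      have := hfix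
      rw [BlR, div_eq_iff (ne_of_gt hd)] at this
      linarith
    ring_nf
    ring_nf at hnum
    nlinarith
  have hL' : L = 1 := by
    have := pow_eq_zero_iff (n := 3) (by norm_num) |>.mp hcube
    linarith
  rwa [hL'] at hlim
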